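/- Let Q₀ be a Γ-periodic (n×n)-matrix-valued function on ℝ^d with Q₀ ∈ L_∞. Then for every ε > 0 the operator of multiplication by Q₀^ε − Q̄₀ maps H¹(ℝ^d;ℂⁿ) continuously into H^{-1}(ℝ^d;ℂⁿ), and ‖[Q₀^ε − Q̄₀]‖_{H¹(ℝ^d)→H^{-1}(ℝ^d)} ≤ C_{Q₀} ε, where the constant C_{Q₀} is controlled in terms of d, ‖Q₀‖_{L_∞}, and the parameters of the lattice Γ. -/

import Mathlib

/-!
Meshkova–Suslina, Statement 8 (Lemma 2.7): for a bounded `Γ`-periodic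
`(n×n)`-matrix-valued function `Q₀`, the operator of multiplication by
`Q₀^ε − Q̄₀` maps `H¹(ℝ^d;ℂⁿ)` continuously into `H^{-1}(ℝ^d;ℂⁿ)` with
`‖[Q₀^ε − Q̄₀]‖_{H¹ → H^{-1}} ≤ C_{Q₀} ε` for all `ε > 0`.

Since `H^{-1}` is the dual of `H¹`, the operator norm bound is expressed
through the duality pairing: for all `F, v ∈ H¹(ℝ^d;ℂⁿ)`,
`|((Q₀^ε − Q̄₀)F, v)_{L₂}| ≤ C_{Q₀} ε ‖F‖_{H¹} ‖v‖_{H¹}`.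
Matrices are encoded entrywise (`Q₀ x i k` is the `(i,k)` entry); membership
in `H¹` is encoded via classical differentiability together with
square-integrability of the function and of its derivative, and
`Q̄₀ = |Ω|⁻¹ ∫_Ω Q₀`.  The constant `C_{Q₀}` (controlled in terms of `d`,
`‖Q₀‖_{L_∞}` and the lattice `Γ`) is chosen before `ε`, `F`, `v`.
-/

open MeasureTheory
open scoped ENNReal NNReal
open scoped Pointwise

noncomputable section

private lemma coord_norm_le {n : ℕ} (z : EuclideanSpace ℂ (Fin n)) (j : Fin n) : ‖z j‖ ≤ ‖z‖ := by
  rw [EuclideanSpace.norm_eq]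
  have h1 : ‖z j‖ = Real.sqrt (‖z j‖ ^ 2) := (Real.sqrt_sq (norm_nonneg _)).symm
  rw [h1]
  exact Real.sqrt_le_sqrt (Finset.single_le_sum (f := fun i => ‖z i‖ ^ 2)
    (fun i _ => sq_nonneg _) (Finset.mem_univ j))

private lemma two_cs (a b c d : ℝ) (ha : 0 ≤ a) (hb : 0 ≤ b) (hc : 0 ≤ c) (hd : 0 ≤ d) :
    a * c + b * d ≤ Real.sqrt (a ^ 2 + b ^ 2) * Real.sqrt (c ^ 2 + d ^ 2) := by
  have h1 : (a * c + b * d) ^ 2 ≤ (a ^ 2 + b ^ 2) * (c ^ 2 + d ^ 2) := by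
    nlinarith [sq_nonneg (a * d - b * c)]
  calc a * c + b * d ≤ Real.sqrt ((a * c + b * d) ^ 2) := by
        rw [Real.sqrt_sq (by positivity)]
    _ ≤ Real.sqrt ((a ^ 2 + b ^ 2) * (c ^ 2 + d ^ 2)) := Real.sqrt_le_sqrt h1
    _ = _ := Real.sqrt_mul (by positivity) _

private lemma integral_cs {α : Type*} [MeasurableSpace α] (μ : Measure α) (f g : α → ℝ)
    (hfm : AEStronglyMeasurable f μ) (hgm : AEStronglyMeasurable g μ)
    (hfnn : ∀ x, 0 ≤ f x) (hgnn : ∀ x, 0 ≤ g x)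
    (hf2 : Integrable (fun x => f x ^ 2) μ) (hg2 : Integrable (fun x => g x ^ 2) μ) :
    ∫ x, f x * g x ∂μ ≤ Real.sqrt (∫ x, f x ^ 2 ∂μ) * Real.sqrt (∫ x, g x ^ 2 ∂μ) := by
  set A := ∫ x, f x ^ 2 ∂μ with hAdef
  set B := ∫ x, g x ^ 2 ∂μ with hBdef
  have hA0 : 0 ≤ A := integral_nonneg fun x => sq_nonneg _
  have hB0 : 0 ≤ B := integral_nonneg fun x => sq_nonneg _
  have hfg : Integrable (fun x => f x * g x) μ := by
    refine Integrable.mono' ((hf2.add hg2).div_const 2) (hfm.mul hgm) ?_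
    filter_upwards with x
    have h := sq_nonneg (f x - g x)
    simp only [Pi.add_apply]
    rw [Real.norm_eq_abs, abs_of_nonneg (mul_nonneg (hfnn x) (hgnn x))]
    nlinarith
  have key : ∀ t : ℝ, 0 < t → ∫ x, f x * g x ∂μ ≤ (t * A + B / t) / 2 := by
    intro t ht
    have hint : Integrable (fun x => (t * f x ^ 2 + g x ^ 2 / t) / 2) μ :=
      ((hf2.const_mul t).add (hg2.div_const t)).div_const 2
    have hmono : ∫ x, f x * g x ∂μ ≤ ∫ x, (t * f x ^ 2 + g x ^ 2 / t) / 2 ∂μ := by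
      refine integral_mono hfg hint fun x => ?_
      rw [le_div_iff₀ (by norm_num : (0:ℝ) < 2), ← sub_nonneg]
      have heq2 : t * f x ^ 2 + g x ^ 2 / t - f x * g x * 2 = (t * f x - g x) ^ 2 / t := by
        field_simp; ring
      rw [heq2]
      positivity
    calc ∫ x, f x * g x ∂μ ≤ ∫ x, (t * f x ^ 2 + g x ^ 2 / t) / 2 ∂μ := hmono
      _ = (t * A + B / t) / 2 := by
          rw [integral_div, integral_add (hf2.const_mul t) (hg2.div_const t),
            integral_const_mul, integral_div]
  rcases eq_or_lt_of_le hA0 with hA | hA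
  · have hle : ∫ x, f x * g x ∂μ ≤ 0 := by
      refine le_of_forall_pos_le_add fun ε hε => ?_
      have ht : (0:ℝ) < (B + 1) / ε := div_pos (by linarith) hε
      have h2 := key _ ht
      rw [← hA, mul_zero, zero_add] at h2
      have h3 : B / ((B + 1) / ε) ≤ ε := by
        rw [div_div_eq_mul_div, div_le_iff₀ (by linarith : (0:ℝ) < B + 1)]
        nlinarith
      linarith
    rw [← hA, Real.sqrt_zero, zero_mul]
    exact hle
  rcases eq_or_lt_of_le hB0 with hB | hB
  · have hle : ∫ x, f x * g x ∂μ ≤ 0 := by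
      refine le_of_forall_pos_le_add fun ε hε => ?_
      have ht : (0:ℝ) < ε / (A + 1) := div_pos hε (by linarith)
      have h2 := key _ ht
      rw [← hB] at h2
      have h3 : ε / (A + 1) * A ≤ ε := by
        rw [div_mul_eq_mul_div, div_le_iff₀ (by linarith : (0:ℝ) < A + 1)]
        nlinarith
      have h4 : (0:ℝ) / (ε / (A + 1)) = 0 := zero_div _
      rw [h4, add_zero] at h2
      linarith
    rw [← hB, Real.sqrt_zero, mul_zero]
    exact hle
  · have hsA : 0 < Real.sqrt A := Real.sqrt_pos.mpr hA
    have hsB : 0 < Real.sqrt B := Real.sqrt_pos.mpr hB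
    have ht : 0 < Real.sqrt B / Real.sqrt A := div_pos hsB hsA
    have h2 := key _ ht
    have e1 : Real.sqrt B / Real.sqrt A * A = Real.sqrt B * Real.sqrt A := by
      rw [div_mul_eq_mul_div, mul_div_assoc, Real.div_sqrt]
    have e2 : B / (Real.sqrt B / Real.sqrt A) = Real.sqrt A * Real.sqrt B := by
      rw [div_div_eq_mul_div, mul_comm B, mul_div_assoc, Real.div_sqrt]
    have heq : (Real.sqrt B / Real.sqrt A * A + B / (Real.sqrt B / Real.sqrt A)) / 2
        = Real.sqrt A * Real.sqrt B := by
      rw [e1, e2]; ring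
    rw [heq] at h2
    exact h2

private lemma shift_L1_bound {d : ℕ} (φ : EuclideanSpace ℝ (Fin d) → ℂ)
    (hφd : Differentiable ℝ φ) (hφi : Integrable φ)
    (W : EuclideanSpace ℝ (Fin d) → ℝ) (hWm : Measurable W) (hWnn : ∀ x, 0 ≤ W x)
    (hWi : Integrable W) (hfd : ∀ x, ‖fderiv ℝ φ x‖ ≤ W x) (h : EuclideanSpace ℝ (Fin d)) :
    ∫ x, ‖φ (x + h) - φ x‖ ≤ ‖h‖ * ∫ x, W x := by
  have hψi : Integrable (fun x => φ (x + h) - φ x) := (hφi.comp_add_right h).sub hφi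
  have hint : ∫ x, ‖φ (x + h) - φ x‖
      = (∫⁻ x, (‖φ (x + h) - φ x‖₊ : ℝ≥0∞)).toReal :=
    integral_norm_eq_lintegral_enorm hψi.aestronglyMeasurable
  -- pointwise bound via FTC
  have hpt : ∀ x : EuclideanSpace ℝ (Fin d), (‖φ (x + h) - φ x‖₊ : ℝ≥0∞)
      ≤ ∫⁻ t in Set.Icc (0:ℝ) 1, ENNReal.ofReal (W (x + t • h) * ‖h‖) := by
    intro x
    by_cases htop : (∫⁻ t in Set.Icc (0:ℝ) 1, ENNReal.ofReal (W (x + t • h) * ‖h‖)) = ⊤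
    · rw [htop]; exact le_top
    · -- the bound W (x + t • h) * ‖h‖ is integrable on [0,1]
      have humeas : Measurable fun t : ℝ => W (x + t • h) * ‖h‖ := by
        have hcont : Continuous fun t : ℝ => x + t • h :=
          continuous_const.add (continuous_id.smul continuous_const)
        exact (hWm.comp hcont.measurable).mul measurable_const
      have hunn : ∀ t : ℝ, 0 ≤ W (x + t • h) * ‖h‖ :=
        fun t => mul_nonneg (hWnn _) (norm_nonneg _)
      have huint : IntegrableOn (fun t : ℝ => W (x + t • h) * ‖h‖) (Set.Icc (0:ℝ) 1) := by
        refine ⟨humeas.aestronglyMeasurable, ?_⟩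
        rw [hasFiniteIntegral_iff_norm]
        have : ∀ t : ℝ, ENNReal.ofReal ‖W (x + t • h) * ‖h‖‖ =
            ENNReal.ofReal (W (x + t • h) * ‖h‖) := by
          intro t; rw [Real.norm_eq_abs, abs_of_nonneg (hunn t)]
        simp_rw [this]
        exact Ne.lt_top htop
      -- derivative of t ↦ φ (x + t • h)
      set ψ' : ℝ → ℂ := fun t => (fderiv ℝ φ (x + t • h)) h with hψ'def
      have hψ'meas : Measurable ψ' := by
        have hcont : Continuous fun t : ℝ => x + t • h :=
          continuous_const.add (continuous_id.smul continuous_const)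
        exact (measurable_fderiv_apply_const ℝ φ h).comp hcont.measurable
      have hψ'bound : ∀ t : ℝ, ‖ψ' t‖ ≤ W (x + t • h) * ‖h‖ := fun t =>
        le_trans ((fderiv ℝ φ (x + t • h)).le_opNorm h)
          (mul_le_mul_of_nonneg_right (hfd _) (norm_nonneg _))
      have hψ'int : IntervalIntegrable ψ' volume 0 1 := by
        rw [intervalIntegrable_iff]
        refine Integrable.mono' (huint.mono_set ?_) hψ'meas.aestronglyMeasurable
          (Filter.Eventually.of_forall fun t => hψ'bound t)
        rw [Set.uIoc_of_le (by norm_num : (0:ℝ) ≤ 1)]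
        exact Set.Ioc_subset_Icc_self
      have hderiv : ∀ t ∈ Set.uIcc (0:ℝ) 1, HasDerivAt (fun s : ℝ => φ (x + s • h)) (ψ' t) t := by
        intro t _
        have hc : HasDerivAt (fun s : ℝ => x + s • h) h t := by
          simpa using ((hasDerivAt_id t).smul_const h).const_add x
        exact (hφd (x + t • h)).hasFDerivAt.comp_hasDerivAt t hc
      have hftc : ∫ t in (0:ℝ)..1, ψ' t = φ (x + h) - φ x := by
        have := intervalIntegral.integral_eq_sub_of_hasDerivAt hderiv hψ'int
        simpa using this
      have hnorm1 : ‖φ (x + h) - φ x‖ ≤ ∫ t in (0:ℝ)..1, W (x + t • h) * ‖h‖ := by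
        rw [← hftc]
        refine le_trans (intervalIntegral.norm_integral_le_integral_norm (by norm_num)) ?_
        refine intervalIntegral.integral_mono_on (by norm_num) ?_ ?_ fun t _ => hψ'bound t
        · exact hψ'int.norm
        · rw [intervalIntegrable_iff, Set.uIoc_of_le (by norm_num : (0:ℝ) ≤ 1)]
          exact huint.mono_set Set.Ioc_subset_Icc_self
      have hnn' : (0:ℝ) ≤ ∫ t in (0:ℝ)..1, W (x + t • h) * ‖h‖ := by
        rw [intervalIntegral.integral_of_le (by norm_num : (0:ℝ) ≤ 1)]
        exact integral_nonneg fun t => hunn t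
      calc (‖φ (x + h) - φ x‖₊ : ℝ≥0∞) = ENNReal.ofReal ‖φ (x + h) - φ x‖ := by
            exact (ofReal_norm _).symm
        _ ≤ ENNReal.ofReal (∫ t in (0:ℝ)..1, W (x + t • h) * ‖h‖) :=
            ENNReal.ofReal_le_ofReal hnorm1
        _ = ENNReal.ofReal (∫ t in Set.Ioc (0:ℝ) 1, W (x + t • h) * ‖h‖) := by
            rw [intervalIntegral.integral_of_le (by norm_num : (0:ℝ) ≤ 1)]
        _ = ∫⁻ t in Set.Ioc (0:ℝ) 1, ENNReal.ofReal (W (x + t • h) * ‖h‖) :=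
            ofReal_integral_eq_lintegral_ofReal (huint.mono_set Set.Ioc_subset_Icc_self)
              (Filter.Eventually.of_forall fun t => hunn t)
        _ ≤ _ := lintegral_mono_set Set.Ioc_subset_Icc_self
  -- integrate the pointwise bound and swap
  have hprodmeas : Measurable fun p : EuclideanSpace ℝ (Fin d) × ℝ =>
      ENNReal.ofReal (W (p.1 + p.2 • h) * ‖h‖) := by
    have hcont : Continuous fun p : EuclideanSpace ℝ (Fin d) × ℝ => p.1 + p.2 • h :=
      continuous_fst.add (continuous_snd.smul continuous_const)
    exact ((hWm.comp hcont.measurable).mul measurable_const).ennreal_ofReal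
  have hswap : ∫⁻ x, ∫⁻ t in Set.Icc (0:ℝ) 1, ENNReal.ofReal (W (x + t • h) * ‖h‖)
      = ∫⁻ t in Set.Icc (0:ℝ) 1, ∫⁻ x, ENNReal.ofReal (W (x + t • h) * ‖h‖) := by
    exact lintegral_lintegral_swap hprodmeas.aemeasurable
  have hWlint : ∫⁻ x, ENNReal.ofReal (W x) = ENNReal.ofReal (∫ x, W x) :=
    (ofReal_integral_eq_lintegral_ofReal hWi (Filter.Eventually.of_forall hWnn)).symm
  have hinner : ∀ t : ℝ, ∫⁻ x, ENNReal.ofReal (W (x + t • h) * ‖h‖)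
      = ENNReal.ofReal (∫ x, W x) * ENNReal.ofReal ‖h‖ := by
    intro t
    have h1 : ∀ x, ENNReal.ofReal (W (x + t • h) * ‖h‖)
        = ENNReal.ofReal (W (x + t • h)) * ENNReal.ofReal ‖h‖ := fun x =>
      ENNReal.ofReal_mul (hWnn _)
    simp_rw [h1]
    rw [lintegral_mul_const _ (by
      have hcont : Continuous fun x : EuclideanSpace ℝ (Fin d) => x + t • h :=
        continuous_id.add continuous_const
      exact (hWm.comp hcont.measurable).ennreal_ofReal)]
    rw [lintegral_add_right_eq_self (fun y => ENNReal.ofReal (W y)) (t • h), hWlint]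
  have hmain : (∫⁻ x, (‖φ (x + h) - φ x‖₊ : ℝ≥0∞))
      ≤ ENNReal.ofReal (∫ x, W x) * ENNReal.ofReal ‖h‖ := by
    calc ∫⁻ x, (‖φ (x + h) - φ x‖₊ : ℝ≥0∞)
        ≤ ∫⁻ x, ∫⁻ t in Set.Icc (0:ℝ) 1, ENNReal.ofReal (W (x + t • h) * ‖h‖) :=
          lintegral_mono hpt
      _ = ∫⁻ t in Set.Icc (0:ℝ) 1, ∫⁻ x, ENNReal.ofReal (W (x + t • h) * ‖h‖) := hswap
      _ = ∫⁻ t in Set.Icc (0:ℝ) 1, ENNReal.ofReal (∫ x, W x) * ENNReal.ofReal ‖h‖ := by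
          exact setLIntegral_congr_fun measurableSet_Icc
            (fun t _ => hinner t)
      _ = (ENNReal.ofReal (∫ x, W x) * ENNReal.ofReal ‖h‖) * volume (Set.Icc (0:ℝ) 1) :=
          setLIntegral_const _ _
      _ = ENNReal.ofReal (∫ x, W x) * ENNReal.ofReal ‖h‖ := by
          rw [Real.volume_Icc]; norm_num
  rw [hint]
  calc (∫⁻ x, (‖φ (x + h) - φ x‖₊ : ℝ≥0∞)).toReal
      ≤ (ENNReal.ofReal (∫ x, W x) * ENNReal.ofReal ‖h‖).toReal := by
        refine ENNReal.toReal_mono ?_ hmain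
        exact ENNReal.mul_ne_top ENNReal.ofReal_ne_top ENNReal.ofReal_ne_top
    _ = (∫ x, W x) * ‖h‖ := by
        rw [ENNReal.toReal_mul, ENNReal.toReal_ofReal (integral_nonneg hWnn),
          ENNReal.toReal_ofReal (norm_nonneg _)]
    _ = ‖h‖ * ∫ x, W x := mul_comm _ _

private lemma key_bound {d : ℕ} (D : Set (EuclideanSpace ℝ (Fin d))) (hDm : MeasurableSet D)
    (hDfin : volume D ≠ ⊤) (hDpos : 0 < (volume D).toReal)
    (R : ℝ) (hR : ∀ h ∈ D, ‖h‖ ≤ R)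
    (g : EuclideanSpace ℝ (Fin d) → ℂ) (hgm : Measurable g)
    (K : ℝ) (hK : 0 ≤ K) (hgb : ∀ x, ‖g x‖ ≤ K)
    (hzero : ∀ c, ∫ u in D, g (c + u) = 0)
    (φ : EuclideanSpace ℝ (Fin d) → ℂ) (hφd : Differentiable ℝ φ) (hφi : Integrable φ)
    (W : EuclideanSpace ℝ (Fin d) → ℝ) (hWm : Measurable W) (hWnn : ∀ x, 0 ≤ W x)
    (hWi : Integrable W) (hfd : ∀ x, ‖fderiv ℝ φ x‖ ≤ W x) :
    ‖∫ x, g x * φ x‖ ≤ K * R * ∫ x, W x := by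
  haveI : IsFiniteMeasure (volume.restrict D) :=
    ⟨by rw [Measure.restrict_apply_univ]; exact hDfin.lt_top⟩
  set I := ∫ x, g x * φ x with hIdef
  set m := (volume D).toReal with hmdef
  have hφm : Measurable φ := hφd.continuous.measurable
  have hWint0 : (0:ℝ) ≤ ∫ x, W x := integral_nonneg hWnn
  -- integrability of the basic products
  have hgφ : Integrable (fun x => g x * φ x) := by
    refine Integrable.mono' (hφi.norm.const_mul K) ((hgm.mul hφm).aestronglyMeasurable) ?_
    filter_upwards with x
    rw [norm_mul]
    exact mul_le_mul_of_nonneg_right (hgb x) (norm_nonneg _)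
  have hgBh : ∀ h : EuclideanSpace ℝ (Fin d), Integrable (fun x => g (x + h) * φ x) := by
    intro h
    have hm : Measurable fun x => g (x + h) :=
      hgm.comp (measurable_id.add_const h)
    refine Integrable.mono' (hφi.norm.const_mul K) ((hm.mul hφm).aestronglyMeasurable) ?_
    filter_upwards with x
    rw [norm_mul]
    exact mul_le_mul_of_nonneg_right (hgb _) (norm_nonneg _)
  have hgAh : ∀ h : EuclideanSpace ℝ (Fin d),
      Integrable (fun x => g (x + h) * φ (x + h)) := fun h => hgφ.comp_add_right h
  -- Claim 1 : translation invariance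
  have hclaim1 : ∀ h : EuclideanSpace ℝ (Fin d), ∫ x, g (x + h) * φ (x + h) = I :=
    fun h => integral_add_right_eq_self (fun y => g y * φ y) h
  -- product integrability on (restrict D).prod volume
  have hPmeas : Measurable fun p : EuclideanSpace ℝ (Fin d) × EuclideanSpace ℝ (Fin d) =>
      g (p.2 + p.1) * φ p.2 := by
    exact (hgm.comp (measurable_snd.add measurable_fst)).mul (hφm.comp measurable_snd)
  have hPint : Integrable (fun p : EuclideanSpace ℝ (Fin d) × EuclideanSpace ℝ (Fin d) =>
      g (p.2 + p.1) * φ p.2) ((volume.restrict D).prod volume) := by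
    refine ⟨hPmeas.aestronglyMeasurable, ?_⟩
    show (∫⁻ p, (‖g (p.2 + p.1) * φ p.2‖₊ : ℝ≥0∞) ∂((volume.restrict D).prod volume)) < ⊤
    calc ∫⁻ p, (‖g (p.2 + p.1) * φ p.2‖₊ : ℝ≥0∞) ∂((volume.restrict D).prod volume)
        = ∫⁻ h in D, ∫⁻ x, (‖g (x + h) * φ x‖₊ : ℝ≥0∞) := by
          rw [lintegral_prod _ hPmeas.nnnorm.coe_nnreal_ennreal.aemeasurable]
      _ ≤ ∫⁻ _ in D, ENNReal.ofReal K * ∫⁻ x, (‖φ x‖₊ : ℝ≥0∞) := by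
          refine lintegral_mono fun h => ?_
          rw [← lintegral_const_mul _ hφm.nnnorm.coe_nnreal_ennreal]
          refine lintegral_mono fun x => ?_
          rw [← enorm_eq_nnnorm, ← enorm_eq_nnnorm, ← ofReal_norm, ← ofReal_norm, norm_mul,
            ← ENNReal.ofReal_mul hK]
          exact ENNReal.ofReal_le_ofReal
            (mul_le_mul_of_nonneg_right (hgb _) (norm_nonneg _))
      _ = volume D * (ENNReal.ofReal K * ∫⁻ x, (‖φ x‖₊ : ℝ≥0∞)) := by
          rw [setLIntegral_const, mul_comm]
      _ < ⊤ := by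
          refine ENNReal.mul_lt_top hDfin.lt_top ?_
          exact ENNReal.mul_lt_top ENNReal.ofReal_lt_top hφi.2.lt_top
  -- Claim 2 : the h-average of the non-shifted term vanishes
  have hclaim2 : ∫ h in D, (∫ x, g (x + h) * φ x) ∂volume = 0 := by
    have hswap := integral_integral_swap (f := fun h x => g (x + h) * φ x)
      (μ := volume.restrict D) (ν := volume) hPint
    rw [hswap]
    have hin : ∀ x : EuclideanSpace ℝ (Fin d),
        ∫ h in D, g (x + h) * φ x ∂volume = 0 := by
      intro x
      have : ∫ h in D, g (x + h) * φ x ∂volume = (∫ h in D, g (x + h) ∂volume) * φ x := by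
        simp_rw [← smul_eq_mul]
        exact integral_smul_const (fun h => g (x + h)) (φ x)
      rw [this, hzero x, zero_mul]
    simp_rw [hin]
    exact integral_zero _ _
  -- main identity
  have hBint : Integrable (fun h => ∫ x, g (x + h) * φ x) (volume.restrict D) :=
    hPint.integral_prod_left
  have hident : m • I = ∫ h in D, (∫ x, g (x + h) * (φ (x + h) - φ x)) ∂volume := by
    have h1 : ∫ h in D, (∫ x, g (x + h) * (φ (x + h) - φ x)) ∂volume
        = ∫ h in D, ((∫ x, g (x + h) * φ (x + h)) - ∫ x, g (x + h) * φ x) ∂volume := by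
      refine setIntegral_congr_fun hDm fun h _ => ?_
      rw [← integral_sub (hgAh h) (hgBh h)]
      congr 1
      ext x
      ring
    have h2 : Integrable (fun h : EuclideanSpace ℝ (Fin d) =>
        ∫ x, g (x + h) * φ (x + h)) (volume.restrict D) := by
      have : (fun h : EuclideanSpace ℝ (Fin d) => ∫ x, g (x + h) * φ (x + h))
          = fun _ => I := funext fun h => hclaim1 h
      rw [this]
      exact integrable_const I
    rw [h1, integral_sub h2 hBint, hclaim2, sub_zero]
    simp_rw [hclaim1]
    rw [setIntegral_const]
    rfl
  -- norm estimate
  have hζbdd : ∀ h ∈ D, ‖∫ x, g (x + h) * (φ (x + h) - φ x)‖ ≤ K * R * ∫ x, W x := by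
    intro h hh
    have hψi : Integrable (fun x => φ (x + h) - φ x) := (hφi.comp_add_right h).sub hφi
    have hprod : Integrable (fun x => g (x + h) * (φ (x + h) - φ x)) := by
      have : (fun x => g (x + h) * (φ (x + h) - φ x))
          = fun x => g (x + h) * φ (x + h) - g (x + h) * φ x := by ext x; ring
      rw [this]
      exact (hgAh h).sub (hgBh h)
    calc ‖∫ x, g (x + h) * (φ (x + h) - φ x)‖
        ≤ ∫ x, ‖g (x + h) * (φ (x + h) - φ x)‖ := norm_integral_le_integral_norm _
      _ ≤ ∫ x, K * ‖φ (x + h) - φ x‖ := by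
          refine integral_mono hprod.norm (hψi.norm.const_mul K) fun x => ?_
          rw [norm_mul]
          exact mul_le_mul_of_nonneg_right (hgb _) (norm_nonneg _)
      _ = K * ∫ x, ‖φ (x + h) - φ x‖ := integral_const_mul K _
      _ ≤ K * (‖h‖ * ∫ x, W x) := by
          refine mul_le_mul_of_nonneg_left ?_ hK
          exact shift_L1_bound φ hφd hφi W hWm hWnn hWi hfd h
      _ ≤ K * (R * ∫ x, W x) := by
          refine mul_le_mul_of_nonneg_left ?_ hK
          exact mul_le_mul_of_nonneg_right (hR h hh) hWint0
      _ = K * R * ∫ x, W x := by ring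
  have hζmeas : AEStronglyMeasurable
      (fun h => ∫ x, g (x + h) * (φ (x + h) - φ x)) (volume.restrict D) := by
    have : (fun h : EuclideanSpace ℝ (Fin d) => ∫ x, g (x + h) * (φ (x + h) - φ x))
        = fun h => I - ∫ x, g (x + h) * φ x := by
      funext h
      have : (fun x => g (x + h) * (φ (x + h) - φ x))
          = fun x => g (x + h) * φ (x + h) - g (x + h) * φ x := by ext x; ring
      rw [this, integral_sub (hgAh h) (hgBh h), hclaim1 h]
    rw [this]
    exact (integrable_const I).aestronglyMeasurable.sub hBint.aestronglyMeasurable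
  have hfinal : ‖m • I‖ ≤ (K * R * ∫ x, W x) * m := by
    rw [hident]
    exact norm_setIntegral_le_of_norm_le_const hDfin.lt_top hζbdd
  rw [norm_smul, Real.norm_eq_abs, abs_of_pos hDpos, mul_comm] at hfinal
  exact le_of_mul_le_mul_right hfinal hDpos

private lemma key_bound_eps {d : ℕ} (D : Set (EuclideanSpace ℝ (Fin d))) (hDm : MeasurableSet D)
    (hDfin : volume D ≠ ⊤) (hDpos : 0 < (volume D).toReal)
    (R : ℝ) (hR : ∀ h ∈ D, ‖h‖ ≤ R)
    (g : EuclideanSpace ℝ (Fin d) → ℂ) (hgm : Measurable g)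
    (K : ℝ) (hK : 0 ≤ K) (hgb : ∀ x, ‖g x‖ ≤ K)
    (hzero : ∀ c, ∫ u in D, g (c + u) = 0)
    (φ : EuclideanSpace ℝ (Fin d) → ℂ) (hφd : Differentiable ℝ φ) (hφi : Integrable φ)
    (W : EuclideanSpace ℝ (Fin d) → ℝ) (hWm : Measurable W) (hWnn : ∀ x, 0 ≤ W x)
    (hWi : Integrable W) (hfd : ∀ x, ‖fderiv ℝ φ x‖ ≤ W x)
    (ε : ℝ) (hε : 0 < ε) :
    ‖∫ x, g (ε⁻¹ • x) * φ x‖ ≤ K * R * ε * ∫ x, W x := by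
  have hεne : ε ≠ 0 := ne_of_gt hε
  set Dm := Module.finrank ℝ (EuclideanSpace ℝ (Fin d)) with hDmdef
  -- change of variables
  have hsub : ∫ x, g (ε⁻¹ • x) * φ x
      = |ε ^ Dm| • ∫ y, g y * φ (ε • y) := by
    have h1 : (fun x => g (ε⁻¹ • x) * φ x)
        = fun x => (fun y => g y * φ (ε • y)) (ε⁻¹ • x) := by
      funext x
      simp only []
      rw [smul_inv_smul₀ hεne]
    rw [h1]
    exact Measure.integral_comp_inv_smul volume (fun y => g y * φ (ε • y)) ε
  -- the scaled test function
  set φ' : EuclideanSpace ℝ (Fin d) → ℂ := fun y => φ (ε • y) with hφ'def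
  set W' : EuclideanSpace ℝ (Fin d) → ℝ := fun y => W (ε • y) * ε with hW'def
  have hsmul : Differentiable ℝ fun y : EuclideanSpace ℝ (Fin d) => ε • y :=
    (differentiable_id.const_smul ε)
  have hφ'd : Differentiable ℝ φ' := hφd.comp hsmul
  have hφ'i : Integrable φ' := by
    exact (integrable_comp_smul_iff volume φ hεne).mpr hφi
  have hW'm : Measurable W' := by
    have : Measurable fun y : EuclideanSpace ℝ (Fin d) => ε • y :=
      (continuous_const_smul ε).measurable
    exact (hWm.comp this).mul measurable_const
  have hW'nn : ∀ y, 0 ≤ W' y := fun y => mul_nonneg (hWnn _) hε.le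
  have hW'i : Integrable W' := by
    exact ((integrable_comp_smul_iff volume W hεne).mpr hWi).mul_const ε
  have hfd' : ∀ y, ‖fderiv ℝ φ' y‖ ≤ W' y := by
    intro y
    have hinner : HasFDerivAt (fun y : EuclideanSpace ℝ (Fin d) => ε • y)
        (ε • ContinuousLinearMap.id ℝ (EuclideanSpace ℝ (Fin d))) y :=
      (hasFDerivAt_id y).const_smul ε
    have hcomp : HasFDerivAt φ'
        ((fderiv ℝ φ (ε • y)).comp (ε • ContinuousLinearMap.id ℝ (EuclideanSpace ℝ (Fin d)))) y :=
      (hφd (ε • y)).hasFDerivAt.comp y hinner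
    rw [hcomp.fderiv]
    calc ‖(fderiv ℝ φ (ε • y)).comp (ε • ContinuousLinearMap.id ℝ (EuclideanSpace ℝ (Fin d)))‖
        ≤ ‖fderiv ℝ φ (ε • y)‖ * ‖ε • ContinuousLinearMap.id ℝ (EuclideanSpace ℝ (Fin d))‖ :=
          ContinuousLinearMap.opNorm_comp_le _ _
      _ ≤ ‖fderiv ℝ φ (ε • y)‖ * ε := by
          refine mul_le_mul_of_nonneg_left ?_ (norm_nonneg _)
          refine ContinuousLinearMap.opNorm_le_bound _ hε.le fun u => ?_
          rw [ContinuousLinearMap.smul_apply, ContinuousLinearMap.id_apply, norm_smul,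
            Real.norm_eq_abs, abs_of_pos hε]
      _ ≤ W (ε • y) * ε := mul_le_mul_of_nonneg_right (hfd _) hε.le
  have hKB := key_bound D hDm hDfin hDpos R hR g hgm K hK hgb hzero φ' hφ'd hφ'i
    W' hW'm hW'nn hW'i hfd'
  -- compute ∫ W'
  have hWscale : ∫ y, W (ε • y) = |(ε ^ Dm)⁻¹| • ∫ x, W x :=
    Measure.integral_comp_smul volume W ε
  have hW'val : ∫ y, W' y = |(ε ^ Dm)⁻¹| * ε * ∫ x, W x := by
    rw [hW'def]
    simp_rw [fun y => mul_comm (W (ε • y)) ε]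
    rw [integral_const_mul ε, hWscale, smul_eq_mul]
    ring
  have hεpow : 0 < ε ^ Dm := pow_pos hε _
  rw [hsub]
  rw [norm_smul, Real.norm_eq_abs, abs_abs, abs_of_pos hεpow]
  calc ε ^ Dm * ‖∫ y, g y * φ' y‖ ≤ ε ^ Dm * (K * R * ∫ y, W' y) :=
        mul_le_mul_of_nonneg_left hKB hεpow.le
    _ = K * R * ε * ∫ x, W x := by
        rw [hW'val, abs_inv, abs_of_pos hεpow]
        field_simp

set_option maxHeartbeats 1000000 in
theorem statement8
    {d n : ℕ} (hd : 0 < d)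
    -- the lattice basis `a₁, …, a_d` of `Γ`
    (a : Fin d → EuclideanSpace ℝ (Fin d)) (ha : LinearIndependent ℝ a)
    -- the elementary cell `Ω = {∑ τ_j a_j : −1/2 < τ_j < 1/2}`
    (Ω : Set (EuclideanSpace ℝ (Fin d)))
    (hΩ : Ω = {x | ∃ τ : Fin d → ℝ,
      (∀ j, τ j ∈ Set.Ioo (-(1 / 2) : ℝ) (1 / 2)) ∧ x = ∑ j, τ j • a j})
    -- `Q₀` : a `Γ`-periodic `(n×n)`-matrix-valued function with `Q₀ ∈ L_∞`
    (Q₀ : EuclideanSpace ℝ (Fin d) → Fin n → Fin n → ℂ)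
    (hQmeas : Measurable Q₀)
    (hQper : ∀ (x : EuclideanSpace ℝ (Fin d)) (k : Fin d → ℤ),
      Q₀ (x + ∑ j, k j • a j) = Q₀ x)
    (M : ℝ) (hQbdd : ∀ x i k, ‖Q₀ x i k‖ ≤ M)
    -- `Q̄₀ = |Ω|⁻¹ ∫_Ω Q₀(x) dx`, the mean value of `Q₀`
    (Qbar : Fin n → Fin n → ℂ)
    (hQbar : ∀ i k, Qbar i k = ((volume Ω).toReal)⁻¹ • ∫ x in Ω, Q₀ x i k) :
    -- `∃ C_{Q₀}` (controlled in terms of `d`, `‖Q₀‖_{L_∞}` and `Γ`) such that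
    -- `‖[Q₀^ε − Q̄₀]‖_{H¹(ℝ^d)→H^{-1}(ℝ^d)} ≤ C_{Q₀} ε` for all `ε > 0`
    ∃ C : ℝ, 0 < C ∧
      ∀ ε : ℝ, 0 < ε →
        ∀ F v : EuclideanSpace ℝ (Fin d) → EuclideanSpace ℂ (Fin n),
          Differentiable ℝ F → Differentiable ℝ v →
          Integrable (fun x => ‖F x‖ ^ 2) → Integrable (fun x => ‖fderiv ℝ F x‖ ^ 2) →
          Integrable (fun x => ‖v x‖ ^ 2) → Integrable (fun x => ‖fderiv ℝ v x‖ ^ 2) →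
          ‖∫ x, ∑ i, (starRingEnd ℂ) (v x i) *
              (∑ k, (Q₀ (ε⁻¹ • x) i k - Qbar i k) * F x k)‖ ≤
            C * ε * Real.sqrt (∫ x, (‖F x‖ ^ 2 + ‖fderiv ℝ F x‖ ^ 2)) *
              Real.sqrt (∫ x, (‖v x‖ ^ 2 + ‖fderiv ℝ v x‖ ^ 2)) := by
  classical
  haveI : Nonempty (Fin d) := ⟨⟨0, hd⟩⟩
  -- the basis
  set b : Module.Basis (Fin d) ℝ (EuclideanSpace ℝ (Fin d)) :=
    basisOfLinearIndependentOfCardEqFinrank ha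
      (by simp [finrank_euclideanSpace_fin]) with hbdef
  have hb : ⇑b = a := coe_basisOfLinearIndependentOfCardEqFinrank ha _
  -- the lattice
  set L : AddSubgroup (EuclideanSpace ℝ (Fin d)) :=
    (Submodule.span ℤ (Set.range ⇑b)).toAddSubgroup with hLdef
  haveI hLcount : Countable L := by
    have hmem : ∀ c : Fin d → ℤ, (∑ i, c i • b i) ∈ L := fun c =>
      Submodule.sum_mem _ fun i _ =>
        Submodule.smul_mem _ _ (Submodule.subset_span (Set.mem_range_self i))
    have hsurj : Function.Surjective
        (fun c : Fin d → ℤ => (⟨∑ i, c i • b i, hmem c⟩ : L)) := by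
      rintro ⟨x, hx⟩
      obtain ⟨c, hc⟩ := (Submodule.mem_span_range_iff_exists_fun ℤ).mp
        ((Submodule.mem_toAddSubgroup _).mp hx)
      exact ⟨c, Subtype.ext hc⟩
    exact hsurj.countable
  -- periodicity with respect to the lattice
  have hper : ∀ (γ : L) (x : EuclideanSpace ℝ (Fin d)),
      Q₀ ((γ : EuclideanSpace ℝ (Fin d)) + x) = Q₀ x := by
    rintro ⟨y, hy⟩ x
    obtain ⟨c, hc⟩ := (Submodule.mem_span_range_iff_exists_fun ℤ).mp
      ((Submodule.mem_toAddSubgroup _).mp hy)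
    have hc' : ∑ i, c i • a i = y := by rw [← hb]; exact hc
    have := hQper x c
    rw [hc'] at this
    simpa [add_comm] using this
  -- fundamental domains
  have hD₀ : IsAddFundamentalDomain L (ZSpan.fundamentalDomain b) volume :=
    ZSpan.isAddFundamentalDomain' b volume
  set c₀ : EuclideanSpace ℝ (Fin d) := ∑ j, (2⁻¹ : ℝ) • b j with hc₀def
  set D : Set (EuclideanSpace ℝ (Fin d)) := (-c₀) +ᵥ ZSpan.fundamentalDomain b with hDdef
  have hD : IsAddFundamentalDomain L D volume := hD₀.vadd_of_comm (-c₀)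
  have hrepr_c₀ : ∀ i, b.repr c₀ i = 2⁻¹ := fun i => by
    rw [hc₀def]
    exact congrFun (b.repr_sum_self fun _ => (2⁻¹ : ℝ)) i
  have hDmem : ∀ x, x ∈ D ↔ ∀ i, b.repr x i ∈ Set.Ico (-(1/2) : ℝ) (1/2) := by
    intro x
    rw [hDdef, Set.mem_vadd_set_iff_neg_vadd_mem, neg_neg, vadd_eq_add,
      ZSpan.mem_fundamentalDomain]
    have key : ∀ i, b.repr (c₀ + x) i = 2⁻¹ + b.repr x i := fun i => by
      rw [map_add, Finsupp.add_apply, hrepr_c₀ i]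
    constructor
    · intro h i
      have := h i
      rw [key i, Set.mem_Ico] at this
      rw [Set.mem_Ico]
      constructor <;> [linarith [this.1]; linarith [this.2]]
    · intro h i
      have := h i
      rw [Set.mem_Ico] at this
      rw [key i, Set.mem_Ico]
      constructor <;> [linarith [this.1]; linarith [this.2]]
  have hΩmem : ∀ x, x ∈ Ω ↔ ∀ i, b.repr x i ∈ Set.Ioo (-(1/2) : ℝ) (1/2) := by
    intro x
    rw [hΩ]
    constructor
    · rintro ⟨τ, hτ, rfl⟩
      have hx : ∑ j, τ j • a j = ∑ j, τ j • b j := by rw [hb]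
      rw [hx]
      intro i
      rw [congrFun (b.repr_sum_self τ) i]
      exact hτ i
    · intro h
      refine ⟨fun i => b.repr x i, h, ?_⟩
      have := b.sum_repr x
      rw [hb] at this
      exact this.symm
  -- coordinate functionals are continuous
  have hcont : ∀ i, Continuous fun x : EuclideanSpace ℝ (Fin d) => b.repr x i := by
    intro i
    have : (fun x : EuclideanSpace ℝ (Fin d) => b.repr x i) = ⇑(b.coord i) := by
      funext x; rw [Module.Basis.coord_apply]
    rw [this]
    exact LinearMap.continuous_of_finiteDimensional _
  have hΩopen : IsOpen Ω := by
    have hset : Ω = ⋂ i, (fun x : EuclideanSpace ℝ (Fin d) => b.repr x i) ⁻¹'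
        (Set.Ioo (-(1/2) : ℝ) (1/2)) := by
      ext x
      rw [hΩmem x, Set.mem_iInter]
      rfl
    rw [hset]
    exact isOpen_iInter_of_finite fun i => (isOpen_Ioo).preimage (hcont i)
  have h0Ω : (0 : EuclideanSpace ℝ (Fin d)) ∈ Ω := by
    rw [hΩmem]
    intro i
    rw [map_zero]
    simp only [Finsupp.coe_zero, Pi.zero_apply, Set.mem_Ioo]
    norm_num
  have hΩvolpos : 0 < volume Ω := hΩopen.measure_pos volume ⟨0, h0Ω⟩
  have hDmeas : MeasurableSet D := by
    have hset : D = ⋂ i, (fun x : EuclideanSpace ℝ (Fin d) => b.repr x i) ⁻¹'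
        (Set.Ico (-(1/2) : ℝ) (1/2)) := by
      ext x
      rw [hDmem x, Set.mem_iInter]
      rfl
    rw [hset]
    exact MeasurableSet.iInter fun i => (hcont i).measurable measurableSet_Ico
  -- boundedness of D
  obtain ⟨R₀, hR₀⟩ := (ZSpan.fundamentalDomain_isBounded b).exists_norm_le
  set R : ℝ := R₀ + ‖c₀‖ with hRdef
  have hRD : ∀ h ∈ D, ‖h‖ ≤ R := by
    intro h hh
    rw [hDdef, Set.mem_vadd_set_iff_neg_vadd_mem, neg_neg, vadd_eq_add] at hh
    have h1 : ‖c₀ + h‖ ≤ R₀ := hR₀ _ hh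
    have h2 : h = (c₀ + h) - c₀ := by abel
    rw [h2]
    exact le_trans (norm_sub_le _ _) (by rw [hRdef]; linarith)
  have hDfin : volume D ≠ ⊤ := by
    have hsub : D ⊆ Metric.closedBall 0 R := fun h hh =>
      mem_closedBall_zero_iff.mpr (hRD h hh)
    exact (lt_of_le_of_lt (measure_mono hsub) measure_closedBall_lt_top).ne
  have hΩD : Ω ⊆ D := by
    intro x hx
    rw [hΩmem] at hx
    rw [hDmem]
    intro i
    have := hx i
    rw [Set.mem_Ioo] at this
    rw [Set.mem_Ico]
    exact ⟨le_of_lt this.1, this.2⟩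
  -- the null boundary
  have hnull : volume (D \ Ω) = 0 := by
    have hsub2 : D \ Ω ⊆ ⋃ i, {x : EuclideanSpace ℝ (Fin d) | b.repr x i = -(1/2)} := by
      rintro x ⟨hxD, hxΩ⟩
      rw [hDmem] at hxD
      rw [hΩmem] at hxΩ
      obtain ⟨i, hi⟩ := not_forall.mp hxΩ
      refine Set.mem_iUnion.mpr ⟨i, ?_⟩
      have h1 := hxD i
      rw [Set.mem_Ico] at h1
      have h2 : ¬(-(1/2) < b.repr x i) := by
        intro hlt
        exact hi (Set.mem_Ioo.mpr ⟨hlt, h1.2⟩)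
      exact le_antisymm (not_lt.mp h2) h1.1
    refine measure_mono_null hsub2 (measure_iUnion_null fun i => ?_)
    have hker : LinearMap.ker (b.coord i) ≠ ⊤ := by
      intro hk
      have h1 : b.coord i (b i) = 1 := by
        simp only [Module.Basis.coord_apply, Module.Basis.repr_self, Finsupp.single_eq_same]
      have h2 : b i ∈ LinearMap.ker (b.coord i) := by
        rw [hk]; exact Submodule.mem_top
      rw [LinearMap.mem_ker] at h2
      rw [h2] at h1
      exact zero_ne_one h1
    have hself : b.repr (b i) i = 1 := by
      simp only [Module.Basis.repr_self, Finsupp.single_eq_same]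
    have hset : {x : EuclideanSpace ℝ (Fin d) | b.repr x i = -(1/2)}
        = ((-(1/2) : ℝ) • b i) +ᵥ ((LinearMap.ker (b.coord i) : Submodule ℝ _) :
            Set (EuclideanSpace ℝ (Fin d))) := by
      ext x
      rw [Set.mem_vadd_set_iff_neg_vadd_mem, vadd_eq_add]
      simp only [SetLike.mem_coe, LinearMap.mem_ker, Module.Basis.coord_apply, map_add, map_neg,
        _root_.map_smul, Finsupp.add_apply, Finsupp.neg_apply, Finsupp.smul_apply, hself,
        smul_eq_mul, Set.mem_setOf_eq]
      constructor <;> intro h <;> linarith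
    rw [hset, measure_vadd]
    exact Measure.addHaar_submodule volume _ hker
  have hae : Ω =ᵐ[volume] D := by
    rw [MeasureTheory.ae_eq_set]
    constructor
    · rw [Set.diff_eq_empty.mpr hΩD]
      exact measure_empty
    · exact hnull
  have hvolΩD : volume Ω = volume D := measure_congr hae
  have hΩfin : volume Ω ≠ ⊤ := by rw [hvolΩD]; exact hDfin
  have hmΩpos : 0 < (volume Ω).toReal := ENNReal.toReal_pos (ne_of_gt hΩvolpos) hΩfin
  have hDpos : 0 < (volume D).toReal := by rw [← hvolΩD]; exact hmΩpos
  have hRnn : 0 ≤ R := le_trans (norm_nonneg (0 : EuclideanSpace ℝ (Fin d)))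
    (hRD 0 (hΩD h0Ω))
  -- case n = 0
  rcases Nat.eq_zero_or_pos n with hn | hn
  · refine ⟨1, one_pos, fun ε hε F v _ _ _ _ _ _ => ?_⟩
    subst hn
    have : ∀ x : EuclideanSpace ℝ (Fin d),
        (∑ i : Fin 0, (starRingEnd ℂ) (v x i) *
          (∑ k : Fin 0, (Q₀ (ε⁻¹ • x) i k - Qbar i k) * F x k)) = 0 := by
      intro x
      simp
    simp_rw [this]
    rw [integral_zero, norm_zero]
    positivity
  -- main case
  have hM0 : 0 ≤ M := le_trans (norm_nonneg _) (hQbdd 0 ⟨0, hn⟩ ⟨0, hn⟩)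
  -- entrywise measurability and bounds
  have hQikm : ∀ i k, Measurable fun x => Q₀ x i k := fun i k =>
    (measurable_pi_apply k).comp ((measurable_pi_apply i).comp hQmeas)
  have hQn : ∀ x i k, ‖Q₀ x i k‖ ≤ M := fun x i k => by
    exact hQbdd x i k
  have hQΩint : ∀ i k, IntegrableOn (fun x => Q₀ x i k) Ω := by
    intro i k
    refine Integrable.mono'
      (integrableOn_const hΩfin : IntegrableOn (fun _ => M) Ω volume)
      ((hQikm i k).aestronglyMeasurable.restrict) ?_
    filter_upwards with x
    exact hQn x i k
  have hQbarb : ∀ i k, ‖Qbar i k‖ ≤ M := by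
    intro i k
    rw [hQbar i k]
    have h1 : ‖∫ x in Ω, Q₀ x i k‖ ≤ M * (volume Ω).toReal :=
      norm_setIntegral_le_of_norm_le_const hΩfin.lt_top (fun x _ => hQn x i k)
    rw [norm_smul, Real.norm_eq_abs, abs_of_nonneg (inv_nonneg.mpr hmΩpos.le)]
    calc ((volume Ω).toReal)⁻¹ * ‖∫ x in Ω, Q₀ x i k‖
        ≤ ((volume Ω).toReal)⁻¹ * (M * (volume Ω).toReal) :=
          mul_le_mul_of_nonneg_left h1 (inv_nonneg.mpr hmΩpos.le)
      _ = M := by field_simp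
  -- vanishing mean over translates of D
  have hzero : ∀ i k (c : EuclideanSpace ℝ (Fin d)),
      ∫ u in D, (Q₀ (c + u) i k - Qbar i k) = 0 := by
    intro i k c
    set g : EuclideanSpace ℝ (Fin d) → ℂ := fun y => Q₀ y i k - Qbar i k with hgdef
    have hinv : ∀ (γ : L) (x : EuclideanSpace ℝ (Fin d)), g (γ +ᵥ x) = g x := by
      intro γ x
      have : γ +ᵥ x = (γ : EuclideanSpace ℝ (Fin d)) + x := rfl
      rw [this, hgdef]
      simp only []
      rw [hper γ x]
    have e1 : ∫ u in D, g (c + u) = ∫ w in (fun u => c + u) '' D, g w :=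
      ((measurePreserving_add_left volume c).setIntegral_image_emb
        (Homeomorph.measurableEmbedding (Homeomorph.addLeft c)) g D).symm
    have e2 : (fun u : EuclideanSpace ℝ (Fin d) => c + u) '' D = c +ᵥ D := by
      rw [← Set.image_vadd]
      rfl
    have e3 : ∫ w in c +ᵥ D, g w = ∫ w in D, g w :=
      (hD.vadd_of_comm c).setIntegral_eq hD hinv
    have e4 : ∫ w in D, g w = ∫ w in Ω, g w := (setIntegral_congr_set hae).symm
    have e5 : ∫ w in Ω, g w = 0 := by
      rw [hgdef]
      have hconst : IntegrableOn (fun _ : EuclideanSpace ℝ (Fin d) => Qbar i k) Ω volume :=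
        integrableOn_const hΩfin
      rw [integral_sub (hQΩint i k) hconst, setIntegral_const]
      rw [hQbar i k, smul_smul, measureReal_def, mul_inv_cancel₀ (ne_of_gt hmΩpos), one_smul, sub_self]
    rw [show (fun u => (Q₀ (c + u) i k - Qbar i k)) = fun u => g (c + u) from rfl]
    rw [e1, e2, e3, e4, e5]
  -- the constant
  refine ⟨(n : ℝ)^2 * ((M + M) * R) + 1, by positivity, ?_⟩
  intro ε hε F v hF hv hF2 hF'2 hv2 hv'2
  have hFc : Continuous F := hF.continuous
  have hvc : Continuous v := hv.continuous
  have hFnm : Measurable fun x => ‖F x‖ := hFc.norm.measurable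
  have hvnm : Measurable fun x => ‖v x‖ := hvc.norm.measurable
  have hF'm : Measurable fun x => ‖fderiv ℝ F x‖ := (measurable_fderiv ℝ F).norm
  have hv'm : Measurable fun x => ‖fderiv ℝ v x‖ := (measurable_fderiv ℝ v).norm
  -- the gradient weight
  set W : EuclideanSpace ℝ (Fin d) → ℝ :=
    fun x => ‖F x‖ * ‖fderiv ℝ v x‖ + ‖fderiv ℝ F x‖ * ‖v x‖ with hWdef
  have hWm : Measurable W := ((hFnm.mul hv'm).add (hF'm.mul hvnm))
  have hWnn : ∀ x, 0 ≤ W x := fun x => by positivity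
  have hWi : Integrable W := by
    refine Integrable.mono'
      (((hF2.add hv'2).div_const 2).add ((hF'2.add hv2).div_const 2))
      hWm.aestronglyMeasurable ?_
    filter_upwards with x
    rw [Real.norm_eq_abs, abs_of_nonneg (hWnn x), hWdef]
    simp only [Pi.add_apply]
    nlinarith [sq_nonneg (‖F x‖ - ‖fderiv ℝ v x‖), sq_nonneg (‖fderiv ℝ F x‖ - ‖v x‖)]
  have hWint0 : 0 ≤ ∫ x, W x := integral_nonneg hWnn
  -- ∫ W ≤ X * Y
  set X : ℝ := Real.sqrt (∫ x, (‖F x‖ ^ 2 + ‖fderiv ℝ F x‖ ^ 2)) with hXdef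
  set Y : ℝ := Real.sqrt (∫ x, (‖v x‖ ^ 2 + ‖fderiv ℝ v x‖ ^ 2)) with hYdef
  have hXnn : 0 ≤ X := Real.sqrt_nonneg _
  have hYnn : 0 ≤ Y := Real.sqrt_nonneg _
  have hWXY : ∫ x, W x ≤ X * Y := by
    set P : EuclideanSpace ℝ (Fin d) → ℝ :=
      fun x => Real.sqrt (‖F x‖ ^ 2 + ‖fderiv ℝ F x‖ ^ 2) with hPdef
    set Q' : EuclideanSpace ℝ (Fin d) → ℝ :=
      fun x => Real.sqrt (‖fderiv ℝ v x‖ ^ 2 + ‖v x‖ ^ 2) with hQ'def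
    have hPm : Measurable P := ((hFnm.pow_const 2).add (hF'm.pow_const 2)).sqrt
    have hQ'm : Measurable Q' := ((hv'm.pow_const 2).add (hvnm.pow_const 2)).sqrt
    have hPsq : ∀ x, P x ^ 2 = ‖F x‖ ^ 2 + ‖fderiv ℝ F x‖ ^ 2 := fun x =>
      Real.sq_sqrt (by positivity)
    have hQ'sq : ∀ x, Q' x ^ 2 = ‖fderiv ℝ v x‖ ^ 2 + ‖v x‖ ^ 2 := fun x =>
      Real.sq_sqrt (by positivity)
    have hP2 : Integrable (fun x => P x ^ 2) := by
      have : (fun x => P x ^ 2) = fun x => ‖F x‖ ^ 2 + ‖fderiv ℝ F x‖ ^ 2 :=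
        funext hPsq
      rw [this]; exact hF2.add hF'2
    have hQ'2 : Integrable (fun x => Q' x ^ 2) := by
      have : (fun x => Q' x ^ 2) = fun x => ‖fderiv ℝ v x‖ ^ 2 + ‖v x‖ ^ 2 :=
        funext hQ'sq
      rw [this]; exact hv'2.add hv2
    have hPQi : Integrable (fun x => P x * Q' x) := by
      refine Integrable.mono' ((hP2.add hQ'2).div_const 2)
        (hPm.mul hQ'm).aestronglyMeasurable ?_
      filter_upwards with x
      rw [Real.norm_eq_abs, abs_of_nonneg (by positivity)]
      simp only [Pi.add_apply]
      nlinarith [sq_nonneg (P x - Q' x)]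
    have hmono : ∫ x, W x ≤ ∫ x, P x * Q' x := by
      refine integral_mono hWi hPQi fun x => ?_
      rw [hWdef]
      simp only []
      have := two_cs (‖F x‖) (‖fderiv ℝ F x‖) (‖fderiv ℝ v x‖) (‖v x‖)
        (norm_nonneg _) (norm_nonneg _) (norm_nonneg _) (norm_nonneg _)
      exact this
    have hcs := integral_cs volume P Q' hPm.aestronglyMeasurable hQ'm.aestronglyMeasurable
      (fun x => Real.sqrt_nonneg _) (fun x => Real.sqrt_nonneg _) hP2 hQ'2
    have hXeq : Real.sqrt (∫ x, P x ^ 2) = X := by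
      rw [hXdef]
      have : (fun x => P x ^ 2) = fun x => ‖F x‖ ^ 2 + ‖fderiv ℝ F x‖ ^ 2 := funext hPsq
      rw [this]
    have hYeq : Real.sqrt (∫ x, Q' x ^ 2) = Y := by
      rw [hYdef]
      have : (fun x => Q' x ^ 2) = fun x => ‖v x‖ ^ 2 + ‖fderiv ℝ v x‖ ^ 2 := by
        funext x
        rw [hQ'sq x, add_comm]
      rw [this]
    calc ∫ x, W x ≤ ∫ x, P x * Q' x := hmono
      _ ≤ Real.sqrt (∫ x, P x ^ 2) * Real.sqrt (∫ x, Q' x ^ 2) := hcs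
      _ = X * Y := by rw [hXeq, hYeq]
  -- the test functions
  have hφd : ∀ (i k : Fin n),
      Differentiable ℝ (fun x => (starRingEnd ℂ) (v x i) * F x k) := by
    intro i k
    have hvi : Differentiable ℝ (fun x => v x i) :=
      (((EuclideanSpace.proj (𝕜 := ℂ) i).restrictScalars ℝ).differentiable).comp hv
    have hFk : Differentiable ℝ (fun x => F x k) :=
      (((EuclideanSpace.proj (𝕜 := ℂ) k).restrictScalars ℝ).differentiable).comp hF
    have hconj : Differentiable ℝ (fun x => (starRingEnd ℂ) (v x i)) :=
      Complex.conjCLE.differentiable.comp hvi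
    exact hconj.mul hFk
  have hφint : ∀ (i k : Fin n),
      Integrable (fun x => (starRingEnd ℂ) (v x i) * F x k) := by
    intro i k
    refine Integrable.mono' ((hv2.add hF2).div_const 2)
      ((hφd i k).continuous.measurable).aestronglyMeasurable ?_
    filter_upwards with x
    rw [norm_mul, RCLike.norm_conj]
    simp only [Pi.add_apply]
    calc ‖v x i‖ * ‖F x k‖ ≤ ‖v x‖ * ‖F x‖ :=
          mul_le_mul (coord_norm_le _ i) (coord_norm_le _ k) (norm_nonneg _) (norm_nonneg _)
      _ ≤ (‖v x‖ ^ 2 + ‖F x‖ ^ 2) / 2 := by nlinarith [sq_nonneg (‖v x‖ - ‖F x‖)]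
  have hφfd : ∀ (i k : Fin n) (x : EuclideanSpace ℝ (Fin d)),
      ‖fderiv ℝ (fun y => (starRingEnd ℂ) (v y i) * F y k) x‖ ≤ W x := by
    intro i k x
    set Pk : EuclideanSpace ℂ (Fin n) →L[ℝ] ℂ := (EuclideanSpace.proj (𝕜 := ℂ) k).restrictScalars ℝ
    set Pi' : EuclideanSpace ℂ (Fin n) →L[ℝ] ℂ := (EuclideanSpace.proj (𝕜 := ℂ) i).restrictScalars ℝ
    set CC : ℂ →L[ℝ] ℂ := Complex.conjCLE.toContinuousLinearMap
    have hFk : HasFDerivAt (fun y => F y k) (Pk.comp (fderiv ℝ F x)) x :=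
      (Pk.hasFDerivAt).comp x (hF x).hasFDerivAt
    have hvi : HasFDerivAt (fun y => (starRingEnd ℂ) (v y i))
        (CC.comp (Pi'.comp (fderiv ℝ v x))) x := by
      have h1 : HasFDerivAt (fun y => v y i) (Pi'.comp (fderiv ℝ v x)) x :=
        (Pi'.hasFDerivAt).comp x (hv x).hasFDerivAt
      have h2 := (CC.hasFDerivAt).comp x h1
      exact h2
    have hmul : HasFDerivAt (fun y => (starRingEnd ℂ) (v y i) * F y k) _ x := hvi.mul hFk
    rw [hmul.fderiv]
    have hBn : ‖Pk.comp (fderiv ℝ F x)‖ ≤ ‖fderiv ℝ F x‖ := by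
      refine ContinuousLinearMap.opNorm_le_bound _ (norm_nonneg _) fun u => ?_
      rw [ContinuousLinearMap.comp_apply]
      calc ‖Pk (fderiv ℝ F x u)‖ ≤ ‖fderiv ℝ F x u‖ := coord_norm_le _ k
        _ ≤ ‖fderiv ℝ F x‖ * ‖u‖ := (fderiv ℝ F x).le_opNorm u
    have hAn : ‖CC.comp (Pi'.comp (fderiv ℝ v x))‖ ≤ ‖fderiv ℝ v x‖ := by
      refine ContinuousLinearMap.opNorm_le_bound _ (norm_nonneg _) fun u => ?_
      rw [ContinuousLinearMap.comp_apply, ContinuousLinearMap.comp_apply]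
      have h1 : ‖CC (Pi' (fderiv ℝ v x u))‖ = ‖(fderiv ℝ v x u) i‖ := by
        show ‖Complex.conjCLE _‖ = _
        rw [Complex.conjCLE_apply, RCLike.norm_conj]
        rfl
      rw [h1]
      calc ‖(fderiv ℝ v x u) i‖ ≤ ‖fderiv ℝ v x u‖ := coord_norm_le _ i
        _ ≤ ‖fderiv ℝ v x‖ * ‖u‖ := (fderiv ℝ v x).le_opNorm u
    calc ‖(starRingEnd ℂ) (v x i) • Pk.comp (fderiv ℝ F x)
          + F x k • CC.comp (Pi'.comp (fderiv ℝ v x))‖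
        ≤ ‖(starRingEnd ℂ) (v x i) • Pk.comp (fderiv ℝ F x)‖
          + ‖F x k • CC.comp (Pi'.comp (fderiv ℝ v x))‖ := norm_add_le _ _
      _ ≤ ‖(starRingEnd ℂ) (v x i)‖ * ‖Pk.comp (fderiv ℝ F x)‖
          + ‖F x k‖ * ‖CC.comp (Pi'.comp (fderiv ℝ v x))‖ :=
          add_le_add (ContinuousLinearMap.opNorm_smul_le _ _)
            (ContinuousLinearMap.opNorm_smul_le _ _)
      _ ≤ ‖v x i‖ * ‖fderiv ℝ F x‖ + ‖F x k‖ * ‖fderiv ℝ v x‖ := by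
          rw [RCLike.norm_conj]
          exact add_le_add (mul_le_mul_of_nonneg_left hBn (norm_nonneg _))
            (mul_le_mul_of_nonneg_left hAn (norm_nonneg _))
      _ ≤ ‖v x‖ * ‖fderiv ℝ F x‖ + ‖F x‖ * ‖fderiv ℝ v x‖ := by
          exact add_le_add
            (mul_le_mul_of_nonneg_right (coord_norm_le _ i) (norm_nonneg _))
            (mul_le_mul_of_nonneg_right (coord_norm_le _ k) (norm_nonneg _))
      _ = W x := by rw [hWdef]; ring
  -- entrywise bound via the key estimate
  have hentry : ∀ i k : Fin n,
      ‖∫ x, (Q₀ (ε⁻¹ • x) i k - Qbar i k) * ((starRingEnd ℂ) (v x i) * F x k)‖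
        ≤ (M + M) * R * ε * ∫ x, W x := by
    intro i k
    have hgm : Measurable fun y => Q₀ y i k - Qbar i k :=
      (hQikm i k).sub measurable_const
    have hgb : ∀ y, ‖Q₀ y i k - Qbar i k‖ ≤ M + M := fun y =>
      le_trans (norm_sub_le _ _) (add_le_add (hQn y i k) (hQbarb i k))
    exact key_bound_eps D hDmeas hDfin hDpos R hRD
      (fun y => Q₀ y i k - Qbar i k) hgm (M + M) (by linarith) hgb
      (hzero i k) (fun x => (starRingEnd ℂ) (v x i) * F x k) (hφd i k) (hφint i k)
      W hWm hWnn hWi (hφfd i k) ε hε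
  -- integrability of each term
  have hterm_int : ∀ i k : Fin n,
      Integrable (fun x => (Q₀ (ε⁻¹ • x) i k - Qbar i k)
        * ((starRingEnd ℂ) (v x i) * F x k)) := by
    intro i k
    have hgm : Measurable fun x => Q₀ (ε⁻¹ • x) i k - Qbar i k :=
      ((hQikm i k).comp (measurable_const_smul ε⁻¹)).sub measurable_const
    refine Integrable.mono' ((hφint i k).norm.const_mul (M + M))
      ((hgm.mul ((hφd i k).continuous.measurable)).aestronglyMeasurable) ?_
    filter_upwards with x
    rw [norm_mul]
    refine mul_le_mul_of_nonneg_right ?_ (norm_nonneg _)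
    exact le_trans (norm_sub_le _ _) (add_le_add (hQn _ i k) (hQbarb i k))
  -- rewrite the full integral
  have hre : (∫ x, ∑ i, (starRingEnd ℂ) (v x i) *
        (∑ k, (Q₀ (ε⁻¹ • x) i k - Qbar i k) * F x k))
      = ∑ i, ∑ k, ∫ x, (Q₀ (ε⁻¹ • x) i k - Qbar i k)
        * ((starRingEnd ℂ) (v x i) * F x k) := by
    have h1 : (fun x => ∑ i, (starRingEnd ℂ) (v x i) *
        (∑ k, (Q₀ (ε⁻¹ • x) i k - Qbar i k) * F x k))
        = fun x => ∑ i, ∑ k, (Q₀ (ε⁻¹ • x) i k - Qbar i k)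
          * ((starRingEnd ℂ) (v x i) * F x k) := by
      funext x
      refine Finset.sum_congr rfl fun i _ => ?_
      rw [Finset.mul_sum]
      refine Finset.sum_congr rfl fun k _ => ?_
      ring
    rw [h1]
    rw [integral_finset_sum _ fun i _ => integrable_finset_sum _ fun k _ => hterm_int i k]
    exact Finset.sum_congr rfl fun i _ =>
      integral_finset_sum _ fun k _ => hterm_int i k
  -- conclusion
  rw [hre]
  calc ‖∑ i, ∑ k, ∫ x, (Q₀ (ε⁻¹ • x) i k - Qbar i k)
        * ((starRingEnd ℂ) (v x i) * F x k)‖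
      ≤ ∑ i, ∑ k : Fin n, ‖∫ x, (Q₀ (ε⁻¹ • x) i k - Qbar i k)
        * ((starRingEnd ℂ) (v x i) * F x k)‖ :=
        le_trans (norm_sum_le _ _) (Finset.sum_le_sum fun i _ => norm_sum_le _ _)
    _ ≤ ∑ _i : Fin n, ∑ _k : Fin n, (M + M) * R * ε * ∫ x, W x :=
        Finset.sum_le_sum fun i _ => Finset.sum_le_sum fun k _ => hentry i k
    _ = (n : ℝ)^2 * ((M + M) * R * ε * ∫ x, W x) := by
        rw [Finset.sum_const, Finset.sum_const, Finset.card_univ, Fintype.card_fin,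
          smul_smul, nsmul_eq_mul]
        push_cast
        ring
    _ ≤ (n : ℝ)^2 * ((M + M) * R * ε * (X * Y)) := by
        refine mul_le_mul_of_nonneg_left ?_ (by positivity)
        exact mul_le_mul_of_nonneg_left hWXY (by positivity)
    _ ≤ ((n : ℝ)^2 * ((M + M) * R) + 1) * ε * X * Y := by
        have hεXY : 0 ≤ ε * (X * Y) := by positivity
        nlinarith [sq_nonneg (n : ℝ), mul_nonneg (mul_nonneg hε.le hXnn) hYnn]
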